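/- Let q be an odd prime power. Choosing in each of the (q+1)/2 quadratic parallel classes of lines the q−1 functions g_{ji} for i ∈ {2,…,q} (where g_{ji} = q−1 on the line S_{ji} and −1 elsewhere), one obtains (q²−1)/2 functions that form a basis of the (−1+q)/2-eigenspace of the adjacency matrix of the Paley graph P(q²). -/

import Mathlib

open Finset Matrix


/-- For an odd prime power `q`: index the `(q+1)/2` quadratic parallel classes of lines
in `F_{q²}` by nonzero square slopes `s j` spanning pairwise distinct directions, and in
each class let `S_{ji} = a j i + (s j)·F_q` (`i : Fin q`) be the `q` lines partitioning
`F_{q²}`. Dropping the line with a fixed index `i₀` in each class, the `(q²−1)/2` functions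
`g_{ji}` (equal to `q−1` on `S_{ji}` and `−1` elsewhere, `i ≠ i₀`) are linearly
independent and form a basis of the `(−1+q)/2`-eigenspace of the adjacency matrix of
the Paley graph `P(q²)`. -/
theorem paley_eigenspace_basis (q : ℕ) (hq : IsPrimePow q) (hodd : Odd q)
    (F : Type*) [Field F] [Fintype F] [DecidableEq F] (hF : Fintype.card F = q ^ 2)
    (G : SimpleGraph F) [DecidableRel G.Adj]
    (hG : ∀ x y : F, G.Adj x y ↔ x ≠ y ∧ IsSquare (x - y))
    (K : Subfield F) (hK : Nat.card K = q)
    (s : Fin ((q + 1) / 2) → F) (hs : ∀ j, s j ≠ 0 ∧ IsSquare (s j))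
    (hdist : ∀ j j', j ≠ j' →
      {x : F | ∃ c ∈ K, x = s j * c} ≠ {x : F | ∃ c ∈ K, x = s j' * c})
    (a : Fin ((q + 1) / 2) → Fin q → F)
    (hpart : ∀ j, ∀ γ : F, ∃! i : Fin q, γ ∈ {x : F | ∃ c ∈ K, x = a j i + s j * c})
    (i₀ : Fin q) (g : Fin ((q + 1) / 2) → Fin q → F → ℝ)
    (hg : ∀ j i, g j i = fun γ =>
      Set.indicator {x : F | ∃ c ∈ K, x = a j i + s j * c} (fun _ => (q : ℝ)) γ - 1) :
    LinearIndependent ℝ (fun p : Fin ((q + 1) / 2) × {i : Fin q // i ≠ i₀} => g p.1 p.2) ∧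
    Submodule.span ℝ
        (Set.range (fun p : Fin ((q + 1) / 2) × {i : Fin q // i ≠ i₀} => g p.1 p.2)) =
      Module.End.eigenspace (Matrix.toLin' (G.adjMatrix ℝ)) ((-1 + (q : ℝ)) / 2) := by
  classical
  have hq2 : 2 ≤ q := hq.two_le
  obtain ⟨t, ht⟩ := hodd
  have ht1 : 1 ≤ t := by omega
  have hFodd : Odd (Fintype.card F) := by rw [hF]; exact Odd.pow ⟨t, ht⟩
  have hchar : ringChar F ≠ 2 := by
    intro h
    have h2 := FiniteField.even_card_of_char_two h
    rw [Nat.odd_iff] at hFodd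
    omega
  letI : Fintype K := Fintype.ofFinite K
  have hKcard : Fintype.card K = q := by rw [← Nat.card_eq_fintype_card]; exact hK
  -- the lines as finsets
  set T : Fin ((q + 1) / 2) → Fin q → Finset F :=
    fun j i => univ.filter (fun x => ∃ c ∈ K, x = a j i + s j * c) with hT
  have hmemT : ∀ j i (x : F), x ∈ T j i ↔ ∃ c ∈ K, x = a j i + s j * c := by
    intro j i x; simp [hT]
  have hTcard : ∀ j i, (T j i).card = q := by
    intro j i
    have himg : T j i = Finset.image (fun c : K => a j i + s j * (c : F)) univ := by
      ext x
      simp only [hmemT, Finset.mem_image, Finset.mem_univ, true_and]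
      constructor
      · rintro ⟨c, hc, rfl⟩; exact ⟨⟨c, hc⟩, rfl⟩
      · rintro ⟨⟨c, hc⟩, rfl⟩; exact ⟨c, hc, rfl⟩
    rw [himg, Finset.card_image_of_injective _ (fun c d hcd => ?_), Finset.card_univ, hKcard]
    exact Subtype.ext (mul_left_cancel₀ (hs j).1 (add_left_cancel hcd))
  -- index of the line through x in class j
  have hpart' : ∀ j (γ : F), ∃! i : Fin q, ∃ c ∈ K, γ = a j i + s j * c := hpart
  set ix : Fin ((q + 1) / 2) → F → Fin q := fun j x => (hpart' j x).choose with hix0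
  have hix : ∀ j x, ∃ c ∈ K, x = a j (ix j x) + s j * c := fun j x => (hpart' j x).choose_spec.1
  have hixu : ∀ j (x : F) i, (∃ c ∈ K, x = a j i + s j * c) → i = ix j x :=
    fun j x i h => (hpart' j x).choose_spec.2 i h
  -- line membership relative to a point on the line
  have hline : ∀ j i (x y : F), (∃ c ∈ K, x = a j i + s j * c) →
      ((∃ c ∈ K, y = a j i + s j * c) ↔ ∃ c ∈ K, x - y = s j * c) := by
    rintro j i x y ⟨c₀, hc₀, hx⟩
    constructor
    · rintro ⟨c, hc, rfl⟩
      exact ⟨c₀ - c, sub_mem hc₀ hc, by rw [hx]; ring⟩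
    · rintro ⟨c, hc, hxy⟩
      exact ⟨c₀ - c, sub_mem hc₀ hc, by linear_combination hx - hxy⟩
  -- distinct directions meet only in 0
  have hL0 : ∀ j j', j ≠ j' → ∀ z : F, (∃ c ∈ K, z = s j * c) →
      (∃ c ∈ K, z = s j' * c) → z = 0 := by
    rintro j j' hjj z ⟨c, hc, rfl⟩ ⟨c', hc', h'⟩
    by_contra hz
    have hc0 : c ≠ 0 := by rintro rfl; simp at hz
    have hc'0 : c' ≠ 0 := by rintro rfl; rw [mul_zero] at h'; exact hz h'
    have hsj := (hs j).1
    have hsj' := (hs j').1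
    apply hdist j j' hjj
    ext x
    simp only [Set.mem_setOf_eq]
    constructor
    · rintro ⟨d, hd, rfl⟩
      refine ⟨c' * (c⁻¹ * d), mul_mem hc' (mul_mem (inv_mem hc) hd), ?_⟩
      field_simp
      linear_combination d * h'
    · rintro ⟨d, hd, rfl⟩
      refine ⟨c * (c'⁻¹ * d), mul_mem hc (mul_mem (inv_mem hc') hd), ?_⟩
      field_simp
      linear_combination -d * h'
  -- same class, different lines: disjoint
  have hdisj : ∀ j i i', i ≠ i' → ∀ x : F, x ∈ T j i → x ∈ T j i' → False := by
    intro j i i' hii x hx hx'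
    rw [hmemT] at hx hx'
    exact hii ((hixu j x i hx).trans (hixu j x i' hx').symm)
  -- different classes: lines meet in exactly one point
  have hcross : ∀ j j', j ≠ j' → ∀ i i', (T j i ∩ T j' i').card = 1 := by
    intro j j' hjj i i'
    have hinj : Function.Injective
        (fun p : K × K => s j * (p.1 : F) + s j' * (p.2 : F)) := by
      rintro ⟨c, d⟩ ⟨c', d'⟩ hcd
      simp only [Prod.mk.injEq] at hcd ⊢
      have hz : s j * ((c : F) - c') = s j' * ((d' : F) - d) := by
        linear_combination hcd
      have h0 : s j * ((c : F) - c') = 0 := by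
        apply hL0 j j' hjj
        · exact ⟨(c : F) - c', sub_mem c.2 c'.2, rfl⟩
        · exact ⟨(d' : F) - d, sub_mem d'.2 d.2, hz⟩
      have h0' := hz ▸ h0
      have e1 : (c : F) = c' := by
        rcases mul_eq_zero.mp h0 with h | h
        · exact absurd h (hs j).1
        · exact sub_eq_zero.mp h
      have e2 : (d : F) = d' := by
        rcases mul_eq_zero.mp h0' with h | h
        · exact absurd h (hs j').1
        · exact (sub_eq_zero.mp h).symm
      exact ⟨Subtype.ext e1, Subtype.ext e2⟩
    have hbij : Function.Bijective
        (fun p : K × K => s j * (p.1 : F) + s j' * (p.2 : F)) := by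
      rw [Fintype.bijective_iff_injective_and_card]
      refine ⟨hinj, ?_⟩
      rw [Fintype.card_prod, hKcard, hF]; ring
    obtain ⟨⟨c, d⟩, hcd⟩ := hbij.surjective (a j' i' - a j i)
    simp only at hcd
    set x₀ : F := a j i + s j * (c : F) with hx₀
    have hx₀1 : ∃ e ∈ K, x₀ = a j i + s j * e := ⟨c, c.2, rfl⟩
    have hx₀2 : ∃ e ∈ K, x₀ = a j' i' + s j' * e :=
      ⟨-(d : F), neg_mem d.2, by rw [hx₀]; linear_combination hcd⟩
    rw [Finset.card_eq_one]
    refine ⟨x₀, ?_⟩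
    ext y
    simp only [Finset.mem_inter, hmemT, Finset.mem_singleton]
    constructor
    · rintro ⟨hy1, hy2⟩
      have d1 : ∃ e ∈ K, x₀ - y = s j * e := (hline j i x₀ y hx₀1).mp hy1
      have d2 : ∃ e ∈ K, x₀ - y = s j' * e := (hline j' i' x₀ y hx₀2).mp hy2
      have := hL0 j j' hjj _ d1 d2
      have := sub_eq_zero.mp this
      exact this.symm
    · rintro rfl
      exact ⟨hx₀1, hx₀2⟩
  have hm : Fintype.card F / 2 = (q - 1) * ((q + 1) / 2) := by
    rw [hF, ht]
    have h0 : (2 * t + 1 + 1) / 2 = t + 1 := by omega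
    have h1 : (2 * t + 1) ^ 2 = 4 * (t * t) + 4 * t + 1 := by ring
    have h2 : (2 * t + 1 - 1) * (t + 1) = 2 * (t * t) + 2 * t := by
      have : 2 * t + 1 - 1 = 2 * t := by omega
      rw [this]; ring
    rw [h0, h1, h2]
    generalize t * t = u
    omega
  have hKpow : ∀ c : F, c ∈ K → c ≠ 0 → c ^ (q - 1) = 1 := by
    intro c hc hc0
    have h := FiniteField.pow_card_sub_one_eq_one (⟨c, hc⟩ : K)
      (by simpa using fun h => hc0 (by simpa using congrArg Subtype.val h))
    rw [hKcard] at h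
    have := congrArg (Subtype.val) h
    simpa using this
  have hKsqF : ∀ c : F, c ∈ K → IsSquare c := by
    intro c hc
    rcases eq_or_ne c 0 with rfl | hc0
    · exact ⟨0, by simp⟩
    · rw [FiniteField.isSquare_iff hchar hc0, hm, pow_mul, hKpow c hc hc0, one_pow]
  -- lines through the origin
  set T0 : Fin ((q + 1) / 2) → Finset F :=
    fun j => univ.filter (fun z => ∃ c ∈ K, z = s j * c) with hT0
  have hmemT0 : ∀ j (z : F), z ∈ T0 j ↔ ∃ c ∈ K, z = s j * c := by
    intro j z; simp [hT0]
  have hT0card : ∀ j, (T0 j).card = q := by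
    intro j
    have himg : T0 j = Finset.image (fun c : K => s j * (c : F)) univ := by
      ext x
      simp only [hmemT0, Finset.mem_image, Finset.mem_univ, true_and]
      constructor
      · rintro ⟨c, hc, rfl⟩; exact ⟨⟨c, hc⟩, rfl⟩
      · rintro ⟨⟨c, hc⟩, rfl⟩; exact ⟨c, hc, rfl⟩
    rw [himg, Finset.card_image_of_injective _ (fun c d hcd => ?_), Finset.card_univ, hKcard]
    exact Subtype.ext (mul_left_cancel₀ (hs j).1 hcd)
  have h0T0 : ∀ j, (0 : F) ∈ T0 j := fun j => (hmemT0 j 0).mpr ⟨0, zero_mem K, by ring⟩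
  -- the nonzero squares are exactly the union of the punctured lines through 0
  have hsqiff : ∀ z : F, z ≠ 0 → (IsSquare z ↔ ∃ j, z ∈ T0 j) := by
    have hsub1 : ∀ z : F, z ≠ 0 → (∃ j, z ∈ T0 j) → IsSquare z := by
      rintro z hz ⟨j, hj⟩
      rw [hmemT0] at hj
      obtain ⟨c, hc, rfl⟩ := hj
      exact ((hs j).2).mul (hKsqF c hc)
    -- counting
    set V : Finset F := univ.biUnion (fun j => (T0 j).erase 0) with hV
    have hVcard : V.card = (q + 1) / 2 * (q - 1) := by
      rw [hV, Finset.card_biUnion, Finset.sum_congr rfl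
        (fun j _ => by rw [Finset.card_erase_of_mem (h0T0 j), hT0card]),
        Finset.sum_const, Finset.card_univ, Fintype.card_fin, smul_eq_mul]
      intro j _ j' _ hjj
      rw [Function.onFun, Finset.disjoint_left]
      intro z hz hz'
      rw [Finset.mem_erase, hmemT0] at hz hz'
      exact hz.1 (hL0 j j' hjj z hz.2 hz'.2)
    set R : Finset F := univ.filter (fun z => z ^ (Fintype.card F / 2) = 1) with hR
    have hRcard : R.card ≤ (q + 1) / 2 * (q - 1) := by
      calc R.card ≤ (Polynomial.nthRoots (Fintype.card F / 2) (1 : F)).toFinset.card := by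
            apply Finset.card_le_card
            intro z hz
            rw [hR, Finset.mem_filter] at hz
            rw [Multiset.mem_toFinset, Polynomial.mem_nthRoots]
            · exact hz.2
            · rw [hm]; exact Nat.mul_pos (by omega) (by omega)
        _ ≤ Multiset.card (Polynomial.nthRoots (Fintype.card F / 2) (1 : F)) :=
            Multiset.toFinset_card_le _
        _ ≤ Fintype.card F / 2 := Polynomial.card_nthRoots _ _
        _ = (q + 1) / 2 * (q - 1) := by rw [hm, mul_comm]
    set Sq : Finset F := univ.filter (fun z => z ≠ 0 ∧ IsSquare z) with hSq
    have hVSq : V ⊆ Sq := by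
      intro z hz
      rw [hV, Finset.mem_biUnion] at hz
      obtain ⟨j, _, hj⟩ := hz
      rw [Finset.mem_erase] at hj
      rw [hSq, Finset.mem_filter]
      exact ⟨Finset.mem_univ z, hj.1, hsub1 z hj.1 ⟨j, hj.2⟩⟩
    have hSqR : Sq ⊆ R := by
      intro z hz
      rw [hSq, Finset.mem_filter] at hz
      rw [hR, Finset.mem_filter]
      exact ⟨Finset.mem_univ z, (FiniteField.isSquare_iff hchar hz.2.1).mp hz.2.2⟩
    have hVeq : V = Sq :=
      Finset.eq_of_subset_of_card_le hVSq
        (le_trans (le_trans (Finset.card_le_card hSqR) hRcard) (le_of_eq hVcard.symm))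
    intro z hz
    constructor
    · intro hsq
      have : z ∈ Sq := by rw [hSq, Finset.mem_filter]; exact ⟨Finset.mem_univ z, hz, hsq⟩
      rw [← hVeq, hV, Finset.mem_biUnion] at this
      obtain ⟨j, _, hj⟩ := this
      exact ⟨j, (Finset.mem_erase.mp hj).2⟩
    · exact fun h => hsub1 z hz h
  -- value of g
  have hgval : ∀ j i (x : F), g j i x = (if x ∈ T j i then (q : ℝ) else 0) - 1 := by
    intro j i x
    rw [hg]
    simp only [Set.indicator_apply, Set.mem_setOf_eq, hmemT]
  -- x lies on its own line
  have hxT : ∀ j (x : F), x ∈ T j (ix j x) := fun j x => (hmemT _ _ _).mpr (hix j x)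
  have hixiff : ∀ j i (x : F), x ∈ T j i ↔ ix j x = i := by
    intro j i x
    constructor
    · intro h; exact (hixu j x i ((hmemT _ _ _).mp h)).symm
    · rintro rfl; exact hxT j x
  -- neighbors of x decompose along the quadratic parallel classes
  have hnbdisj : ∀ x : F, ∀ j ∈ univ (α := Fin ((q + 1) / 2)), ∀ j' ∈ univ, j ≠ j' →
      Disjoint ((T j (ix j x)).erase x) ((T j' (ix j' x)).erase x) := by
    intro x j _ j' _ hjj
    rw [Finset.disjoint_left]
    intro y hy hy'
    rw [Finset.mem_erase, hmemT] at hy hy'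
    have d1 : ∃ c ∈ K, x - y = s j * c := (hline j (ix j x) x y (hix j x)).mp hy.2
    have d2 : ∃ c ∈ K, x - y = s j' * c := (hline j' (ix j' x) x y (hix j' x)).mp hy'.2
    exact hy.1 (sub_eq_zero.mp (hL0 j j' hjj _ d1 d2)).symm
  have hnbr : ∀ x : F, G.neighborFinset x =
      univ.biUnion (fun j => (T j (ix j x)).erase x) := by
    intro x
    ext y
    rw [SimpleGraph.mem_neighborFinset, hG, Finset.mem_biUnion]
    constructor
    · rintro ⟨hxy, hsq⟩
      have hz : x - y ≠ 0 := sub_ne_zero.mpr hxy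
      obtain ⟨j, hj⟩ := (hsqiff (x - y) hz).mp hsq
      rw [hmemT0] at hj
      refine ⟨j, Finset.mem_univ j, Finset.mem_erase.mpr ⟨?_, ?_⟩⟩
      · exact fun h => hxy h.symm
      · rw [hmemT]
        exact (hline j (ix j x) x y (hix j x)).mpr hj
    · rintro ⟨j, _, hj⟩
      rw [Finset.mem_erase, hmemT] at hj
      have d1 : ∃ c ∈ K, x - y = s j * c := (hline j (ix j x) x y (hix j x)).mp hj.2
      have hz : x - y ≠ 0 := sub_ne_zero.mpr (fun h => hj.1 h.symm)
      refine ⟨fun h => hj.1 h.symm, (hsqiff (x - y) hz).mpr ⟨j, ?_⟩⟩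
      rw [hmemT0]; exact d1
  -- action of the adjacency matrix
  have hAf : ∀ (f : F → ℝ) (x : F), (G.adjMatrix ℝ *ᵥ f) x =
      ∑ j, ((∑ y ∈ T j (ix j x), f y) - f x) := by
    intro f x
    rw [SimpleGraph.adjMatrix_mulVec_apply, hnbr x, Finset.sum_biUnion (hnbdisj x)]
    exact Finset.sum_congr rfl fun j _ => Finset.sum_erase_eq_sub (hxT j x)
  -- sums of g over lines
  have hsum : ∀ j i j' i', ∑ x ∈ T j' i', g j i x =
      if j' = j then (if i' = i then (q : ℝ) * ((q : ℝ) - 1) else -(q : ℝ)) else 0 := by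
    intro j i j' i'
    have e1 : ∑ x ∈ T j' i', g j i x =
        (((T j' i' ∩ T j i).card : ℝ)) * q - ((T j' i').card : ℝ) := by
      rw [Finset.sum_congr rfl (fun x _ => hgval j i x), Finset.sum_sub_distrib,
        Finset.sum_ite_mem, Finset.sum_const, Finset.sum_const]
      push_cast
      ring
    rw [e1, hTcard]
    rcases eq_or_ne j' j with rfl | hjj
    · simp only [if_true]
      rcases eq_or_ne i' i with rfl | hii
      · rw [Finset.inter_self, hTcard, if_pos rfl]; ring
      · rw [if_neg hii]
        have : T j' i' ∩ T j' i = ∅ := by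
          rw [Finset.eq_empty_iff_forall_notMem]
          intro x hx
          rw [Finset.mem_inter] at hx
          exact hdisj j' i' i hii x hx.1 hx.2
        rw [this]
        simp
    · rw [if_neg hjj, hcross j' j hjj i' i]
      push_cast
      ring
  -- cast fact for n
  have hnR : (((q + 1) / 2 : ℕ) : ℝ) = ((q : ℝ) + 1) / 2 := by
    have h2n : ((q + 1) / 2) * 2 = q + 1 := by omega
    have := congrArg (Nat.cast (R := ℝ)) h2n
    push_cast at this
    linarith
  -- each g j i is an eigenvector
  have heig : ∀ j i, (G.adjMatrix ℝ) *ᵥ (g j i) = ((-1 + (q : ℝ)) / 2) • g j i := by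
    intro j i
    funext x
    rw [hAf, Pi.smul_apply, smul_eq_mul]
    have e1 : ∀ j' : Fin ((q + 1) / 2), (∑ y ∈ T j' (ix j' x), g j i y) - g j i x =
        (if j' = j then (if ix j' x = i then (q : ℝ) * ((q : ℝ) - 1) else -(q : ℝ)) else 0)
          - g j i x := by
      intro j'; rw [hsum]
    rw [Finset.sum_congr rfl (fun j' _ => e1 j'), Finset.sum_sub_distrib,
      Finset.sum_ite_eq' univ j, Finset.sum_const, Finset.card_univ, Fintype.card_fin,
      if_pos (Finset.mem_univ j), hgval, nsmul_eq_mul, hnR]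
    rcases eq_or_ne (ix j x) i with h | h
    · rw [if_pos h, if_pos ((hixiff j i x).mpr h)]
      ring
    · rw [if_neg h, if_neg (fun hmem => h ((hixiff j i x).mp hmem))]
      ring
  have hq0 : (q : ℝ) ≠ 0 := Nat.cast_ne_zero.mpr (by omega)
  -- the key evaluation of ∑_p c_p ∑_{x ∈ T j i} g_{p}
  have hkey : ∀ (c : Fin ((q + 1) / 2) × {i : Fin q // i ≠ i₀} → ℝ)
      (j : Fin ((q + 1) / 2)) (i : Fin q),
      ∑ p : Fin ((q + 1) / 2) × {i : Fin q // i ≠ i₀},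
          c p * (∑ x ∈ T j i, g p.1 p.2 x)
        = (if h : i = i₀ then 0 else (q : ℝ) * (q : ℝ) * c (j, ⟨i, h⟩))
          - (q : ℝ) * ∑ i' : {i : Fin q // i ≠ i₀}, c (j, i') := by
    intro c j i
    have e0 : ∀ p : Fin ((q + 1) / 2) × {i : Fin q // i ≠ i₀},
        c p * (∑ x ∈ T j i, g p.1 p.2 x)
          = c p * (if j = p.1 then
              (if i = (p.2 : Fin q) then (q : ℝ) * ((q : ℝ) - 1) else -(q : ℝ)) else 0) := by
      intro p; rw [hsum p.1 p.2 j i]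
    rw [Finset.sum_congr rfl (fun p _ => e0 p), Fintype.sum_prod_type]
    have e1 : ∀ j', (∑ i' : {i : Fin q // i ≠ i₀}, c (j', i') *
        (if j = j' then (if i = (i' : Fin q) then (q : ℝ) * ((q : ℝ) - 1) else -(q : ℝ)) else 0))
        = if j = j' then (∑ i' : {i : Fin q // i ≠ i₀}, c (j', i') *
            (if i = (i' : Fin q) then (q : ℝ) * ((q : ℝ) - 1) else -(q : ℝ))) else 0 := by
      intro j'
      split_ifs with h
      · simp [h]
      · simp [h]
    rw [Finset.sum_congr rfl (fun j' _ => e1 j'), Finset.sum_ite_eq univ j,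
      if_pos (Finset.mem_univ j)]
    rcases eq_or_ne i i₀ with hii | hi
    · rw [dif_pos hii]
      have e2 : ∀ i' : {i : Fin q // i ≠ i₀}, c (j, i') *
          (if i = (i' : Fin q) then (q : ℝ) * ((q : ℝ) - 1) else -(q : ℝ))
          = -((q : ℝ) * c (j, i')) := by
        intro i'
        rw [if_neg (fun hh => i'.2 (hh.symm.trans hii))]
        ring
      rw [Finset.sum_congr rfl (fun i' _ => e2 i'), Finset.sum_neg_distrib, ← Finset.mul_sum]
      ring
    · rw [dif_neg hi]
      have e2 : ∀ i' : {i : Fin q // i ≠ i₀}, c (j, i') *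
          (if i = (i' : Fin q) then (q : ℝ) * ((q : ℝ) - 1) else -(q : ℝ))
          = (if i' = (⟨i, hi⟩ : {i : Fin q // i ≠ i₀}) then c (j, i') * ((q : ℝ) * (q : ℝ))
              else 0) + -((q : ℝ) * c (j, i')) := by
        intro i'
        rcases eq_or_ne i' ⟨i, hi⟩ with rfl | hne
        · rw [if_pos rfl, if_pos rfl]; ring
        · rw [if_neg hne, if_neg (fun hh => hne (Subtype.ext hh.symm))]; ring
      rw [Finset.sum_congr rfl (fun i' _ => e2 i'), Finset.sum_add_distrib,
        Finset.sum_ite_eq' univ (⟨i, hi⟩ : {i : Fin q // i ≠ i₀}),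
        if_pos (Finset.mem_univ _), Finset.sum_neg_distrib, ← Finset.mul_sum]
      ring
  -- cardinality of the index subtype
  have hcard' : (Fintype.card {i : Fin q // i ≠ i₀} : ℝ) = (q : ℝ) - 1 := by
    have h1 : Fintype.card {i : Fin q // i ≠ i₀} = q - 1 := by
      simp [Fintype.card_subtype_compl]
    rw [h1, Nat.cast_sub (by omega), Nat.cast_one]
  -- LINEAR INDEPENDENCE
  have hLI : LinearIndependent ℝ
      (fun p : Fin ((q + 1) / 2) × {i : Fin q // i ≠ i₀} => g p.1 p.2) := by
    rw [Fintype.linearIndependent_iff]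
    intro c hc
    have hpt : ∀ x : F,
        (∑ p : Fin ((q + 1) / 2) × {i : Fin q // i ≠ i₀}, c p * g p.1 p.2 x) = 0 := by
      intro x
      have h1 := congrFun hc x
      rw [Finset.sum_apply] at h1
      simpa using h1
    have hcT : ∀ j i, ∑ p : Fin ((q + 1) / 2) × {i : Fin q // i ≠ i₀},
        c p * (∑ x ∈ T j i, g p.1 p.2 x) = 0 := by
      intro j i
      have h2 : ∑ p : Fin ((q + 1) / 2) × {i : Fin q // i ≠ i₀},
          c p * (∑ x ∈ T j i, g p.1 p.2 x)
          = ∑ x ∈ T j i, ∑ p : Fin ((q + 1) / 2) × {i : Fin q // i ≠ i₀},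
              c p * g p.1 p.2 x := by
        simp_rw [Finset.mul_sum]
        exact Finset.sum_comm
      rw [h2, Finset.sum_congr rfl (fun x _ => hpt x), Finset.sum_const, smul_zero]
    have hSj : ∀ j, (∑ i' : {i : Fin q // i ≠ i₀}, c (j, i')) = 0 := by
      intro j
      have hc' : ∀ (i : Fin q) (h : i ≠ i₀),
          c (j, ⟨i, h⟩) = (∑ i' : {i : Fin q // i ≠ i₀}, c (j, i')) / (q : ℝ) := by
        intro i h
        have h3 := hcT j i
        rw [hkey c j i, dif_neg h] at h3
        rw [eq_div_iff hq0]
        have h5 : (q : ℝ) * (c (j, ⟨i, h⟩) * (q : ℝ)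
            - ∑ i' : {i : Fin q // i ≠ i₀}, c (j, i')) = 0 := by linear_combination h3
        have h6 := (mul_eq_zero.mp h5).resolve_left hq0
        linarith
      have h4 : (∑ i' : {i : Fin q // i ≠ i₀}, c (j, i'))
          = ((Fintype.card {i : Fin q // i ≠ i₀} : ℝ))
            * ((∑ i' : {i : Fin q // i ≠ i₀}, c (j, i')) / (q : ℝ)) := by
        conv_lhs => rw [Finset.sum_congr rfl (fun i' _ => hc' i'.1 i'.2)]
        rw [Finset.sum_const, Finset.card_univ, nsmul_eq_mul]
      rw [hcard'] at h4
      field_simp at h4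
      linear_combination h4
    intro p
    obtain ⟨j, i'⟩ := p
    have hzero : ∀ (i : Fin q) (h : i ≠ i₀), c (j, ⟨i, h⟩) = 0 := by
      intro i h
      have h3 := hcT j i
      rw [hkey c j i, dif_neg h, hSj j, mul_zero, sub_zero] at h3
      exact (mul_eq_zero.mp h3).resolve_left (mul_ne_zero hq0 hq0)
    exact hzero (i' : Fin q) i'.2
  -- SPAN EQUALITY
  have hspan : Submodule.span ℝ
      (Set.range (fun p : Fin ((q + 1) / 2) × {i : Fin q // i ≠ i₀} => g p.1 p.2)) =
      Module.End.eigenspace (Matrix.toLin' (G.adjMatrix ℝ)) ((-1 + (q : ℝ)) / 2) := by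
    apply le_antisymm
    · rw [Submodule.span_le]
      rintro _ ⟨p, rfl⟩
      rw [SetLike.mem_coe, Module.End.mem_eigenspace_iff, Matrix.toLin'_apply]
      exact heig p.1 p.2
    · intro f hf
      rw [Module.End.mem_eigenspace_iff, Matrix.toLin'_apply] at hf
      -- partition of sums over F along a parallel class
      have hpartF : ∀ j (h : F → ℝ), (∑ x, h x) = ∑ i, ∑ x ∈ T j i, h x := by
        intro j h
        have huniv : (univ : Finset F) = univ.biUnion (fun i => T j i) := by
          ext x
          simp only [Finset.mem_univ, Finset.mem_biUnion, true_iff]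
          exact ⟨ix j x, trivial, hxT j x⟩
        conv_lhs => rw [huniv]
        rw [Finset.sum_biUnion]
        intro i _ i' _ hii
        show Disjoint (T j i) (T j i')
        rw [Finset.disjoint_left]
        exact fun {x} hx hx' => absurd (hdisj j _ _ hii x hx hx') not_false
      -- the total sum of f vanishes
      have htot : (∑ x, f x) = 0 := by
        have h1 : ∑ x, (G.adjMatrix ℝ *ᵥ f) x = ((-1 + (q : ℝ)) / 2) * ∑ x, f x := by
          rw [hf]
          simp only [Pi.smul_apply, smul_eq_mul]
          rw [← Finset.mul_sum]
        have h2 : ∑ x, (G.adjMatrix ℝ *ᵥ f) x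
            = (((q + 1) / 2 : ℕ) : ℝ) * (((q : ℝ) - 1) * ∑ x, f x) := by
          rw [Finset.sum_congr rfl (fun x _ => hAf f x), Finset.sum_comm]
          have h3 : ∀ j : Fin ((q + 1) / 2),
              ∑ x, ((∑ y ∈ T j (ix j x), f y) - f x) = ((q : ℝ) - 1) * ∑ x, f x := by
            intro j
            rw [Finset.sum_sub_distrib]
            have h4 : ∑ x, (∑ y ∈ T j (ix j x), f y) = (q : ℝ) * ∑ x, f x := by
              rw [hpartF j (fun x => ∑ y ∈ T j (ix j x), f y)]
              have h5 : ∀ i, ∑ x ∈ T j i, (∑ y ∈ T j (ix j x), f y)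
                  = (q : ℝ) * ∑ y ∈ T j i, f y := by
                intro i
                rw [Finset.sum_congr rfl (fun x hx => by rw [(hixiff j i x).mp hx]),
                  Finset.sum_const, hTcard, nsmul_eq_mul]
              rw [Finset.sum_congr rfl (fun i _ => h5 i), ← Finset.mul_sum, ← hpartF j f]
            rw [h4]
            ring
          rw [Finset.sum_congr rfl (fun j _ => h3 j), Finset.sum_const, Finset.card_univ,
            Fintype.card_fin, nsmul_eq_mul]
        rw [h2, hnR] at h1
        have hq3R : (3 : ℝ) ≤ (q : ℝ) := by exact_mod_cast (by omega : (3 : ℕ) ≤ q)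
        have h6 : ((q : ℝ) * ((q : ℝ) - 1) / 2) * ∑ x, f x = 0 := by linear_combination h1
        have h7 : ((q : ℝ) * ((q : ℝ) - 1) / 2) ≠ 0 := ne_of_gt (by nlinarith)
        exact (mul_eq_zero.mp h6).resolve_left h7
      -- coefficients
      set cc : Fin ((q + 1) / 2) × {i : Fin q // i ≠ i₀} → ℝ := fun p =>
        ((∑ x ∈ T p.1 (p.2 : Fin q), f x) - (∑ x ∈ T p.1 i₀, f x)) / ((q : ℝ) * (q : ℝ))
        with hccdef
      have hσsum : ∀ j, ∑ i, ∑ x ∈ T j i, f x = 0 := by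
        intro j
        rw [← hpartF j f]
        exact htot
      have hccS : ∀ j, ∑ i' : {i : Fin q // i ≠ i₀}, cc (j, i')
          = -(∑ x ∈ T j i₀, f x) / (q : ℝ) := by
        intro j
        have h7 : ∑ i' : {i : Fin q // i ≠ i₀}, (∑ x ∈ T j (i' : Fin q), f x)
            = -(∑ x ∈ T j i₀, f x) := by
          have h8 : ∑ i ∈ univ.erase i₀, (∑ x ∈ T j i, f x)
              = ∑ i' : {i : Fin q // i ≠ i₀}, (∑ x ∈ T j (i' : Fin q), f x) :=
            Finset.sum_subtype _ (fun i => by simp) _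
          rw [← h8, Finset.sum_erase_eq_sub (Finset.mem_univ i₀), hσsum j]
          ring
        simp only [hccdef]
        rw [← Finset.sum_div, Finset.sum_sub_distrib, h7, Finset.sum_const,
          Finset.card_univ, nsmul_eq_mul, hcard']
        field_simp
        ring
      -- the corrected function
      set w : F → ℝ := ∑ p : Fin ((q + 1) / 2) × {i : Fin q // i ≠ i₀},
        cc p • g p.1 p.2 with hwdef
      have hw_x : ∀ x, w x = ∑ p : Fin ((q + 1) / 2) × {i : Fin q // i ≠ i₀},
          cc p * g p.1 p.2 x := by
        intro x
        rw [hwdef, Finset.sum_apply]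
        simp
      have hline0 : ∀ j i, ∑ x ∈ T j i, (f x - w x) = 0 := by
        intro j i
        have h9 : ∑ x ∈ T j i, w x
            = ∑ p : Fin ((q + 1) / 2) × {i : Fin q // i ≠ i₀},
                cc p * (∑ x ∈ T j i, g p.1 p.2 x) := by
          rw [Finset.sum_congr rfl (fun x _ => hw_x x)]
          simp_rw [Finset.mul_sum]
          exact Finset.sum_comm
        rw [Finset.sum_sub_distrib, h9, hkey cc j i, hccS j]
        rcases eq_or_ne i i₀ with hii | hi
        · rw [dif_pos hii, hii]
          field_simp
          ring
        · rw [dif_neg hi]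
          simp only [hccdef]
          field_simp
          ring
      -- w is an eigenvector combination
      have hAw : G.adjMatrix ℝ *ᵥ w = ((-1 + (q : ℝ)) / 2) • w := by
        rw [hwdef]
        have h10 : G.adjMatrix ℝ *ᵥ (∑ p : Fin ((q + 1) / 2) × {i : Fin q // i ≠ i₀},
            cc p • g p.1 p.2)
            = ∑ p : Fin ((q + 1) / 2) × {i : Fin q // i ≠ i₀},
                cc p • (G.adjMatrix ℝ *ᵥ g p.1 p.2) := by
          rw [← Matrix.mulVecLin_apply, map_sum]
          exact Finset.sum_congr rfl (fun p _ => by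
            rw [LinearMap.map_smul, Matrix.mulVecLin_apply])
        rw [h10, Finset.sum_congr rfl (fun p _ => by rw [heig p.1 p.2, smul_comm]),
          ← Finset.smul_sum]
      -- f - w vanishes
      have hfw : f - w = 0 := by
        have hAfw : G.adjMatrix ℝ *ᵥ (f - w) = ((-1 + (q : ℝ)) / 2) • (f - w) := by
          rw [Matrix.mulVec_sub, hf, hAw, smul_sub]
        funext x
        have h11 := congrFun hAfw x
        rw [hAf (f - w) x,
          Finset.sum_congr rfl (fun j _ => by
            rw [show ∑ y ∈ T j (ix j x), (f - w) y = (0 : ℝ) from hline0 j (ix j x)]),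
          Finset.sum_const, Finset.card_univ, Fintype.card_fin, nsmul_eq_mul, hnR] at h11
        rw [Pi.smul_apply, smul_eq_mul] at h11
        have h12 : (q : ℝ) * (f - w) x = 0 := by linear_combination -h11
        have h13 := (mul_eq_zero.mp h12).resolve_left hq0
        simpa using h13
      have hfeq : f = w := sub_eq_zero.mp hfw
      rw [hfeq, hwdef]
      exact Submodule.sum_mem _ (fun p _ =>
        Submodule.smul_mem _ _ (Submodule.subset_span ⟨p, rfl⟩))
  exact ⟨hLI, hspan⟩
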